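/- Let H be a complex Hilbert space, D a dictionary (a set of unit vectors whose closed linear span equals H), M > 0, and f ∈ H(D,M). Suppose the Weak Orthogonal Greedy Algorithm with weakness parameters t_k ∈ (0,1] produces selections ψ_1, ψ_2, … ∈ D: with H_0 = {0}, H_k = span{ψ_1,…,ψ_k}, residuals f_k = f − P_{H_{k-1}}(f), selection condition |⟨f_k, ψ_k⟩| ≥ t_k·sup_{ψ∈D} |⟨f_k, ψ⟩|, and v_k := ‖ψ_k − P_{H_{k-1}}(ψ_k)‖ > 0. Then for every n ≥ 1, ‖f_n‖ ≤ M·(1 + ∑_{k=1}^{n-1} t_k²)^{-1/2}. -/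

import Mathlib

/-- Orthogonal projection onto (the closure of) a subspace, as a map `H → H`. -/
noncomputable def proj {H : Type*} [NormedAddCommGroup H] [InnerProductSpace ℂ H]
    [CompleteSpace H] (K : Submodule ℂ H) (f : H) : H :=
  haveI : CompleteSpace K.topologicalClosure := K.isClosed_topologicalClosure.completeSpace_coe
  (K.topologicalClosure.orthogonalProjectionOnto f : H)

section helpers
variable {H : Type*} [NormedAddCommGroup H] [InnerProductSpace ℂ H] [CompleteSpace H]

lemma proj_mem (K : Submodule ℂ H) (f : H) : proj K f ∈ K.topologicalClosure := by
  haveI : CompleteSpace K.topologicalClosure := K.isClosed_topologicalClosure.completeSpace_coe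
  exact (K.topologicalClosure.orthogonalProjectionOnto f).2

lemma sub_proj_inner (K : Submodule ℂ H) (f : H) {g : H} (hg : g ∈ K.topologicalClosure) :
    (inner ℂ (f - proj K f) g : ℂ) = 0 := by
  haveI : CompleteSpace K.topologicalClosure := K.isClosed_topologicalClosure.completeSpace_coe
  exact Submodule.starProjection_inner_eq_zero f g hg

lemma norm_sub_proj_le (K : Submodule ℂ H) (f : H) {g : H} (hg : g ∈ K.topologicalClosure) :
    ‖f - proj K f‖ ≤ ‖f - g‖ := by
  haveI : CompleteSpace K.topologicalClosure := K.isClosed_topologicalClosure.completeSpace_coe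
  rw [show proj K f = K.topologicalClosure.starProjection f from rfl,
    Submodule.starProjection_minimal]
  exact ciInf_le ⟨0, by rintro x ⟨y, rfl⟩; positivity⟩ (⟨g, hg⟩ : K.topologicalClosure)

lemma real_step {A A' S T M : ℝ} (hM : 0 < M) (hA' : 0 ≤ A') (hT : 0 ≤ T)
    (hrec : A' ≤ A - T * A ^ 2 / M ^ 2) (hind : S * A ≤ M ^ 2) :
    (S + T) * A' ≤ M ^ 2 := by
  have hM2 : (0:ℝ) < M ^ 2 := by positivity
  have hTA : 0 ≤ T * A ^ 2 / M ^ 2 := by positivity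
  have hA : 0 ≤ A := le_trans (le_trans hA' hrec) (by linarith)
  have hrec' : A' * M ^ 2 ≤ A * M ^ 2 - T * A ^ 2 := by
    have := mul_le_mul_of_nonneg_right hrec hM2.le
    calc A' * M ^ 2 ≤ (A - T * A ^ 2 / M ^ 2) * M ^ 2 := this
      _ = A * M ^ 2 - T * A ^ 2 := by rw [sub_mul, div_mul_cancel₀ _ (ne_of_gt hM2)]
  rcases eq_or_lt_of_le hA with h0 | h0
  · have hA0 : A = 0 := h0.symm
    have : A' = 0 := le_antisymm (by nlinarith) hA'
    rw [this]; simpa using hM2.le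
  · have h1 : A' ≤ A := by nlinarith
    have h2 : T * A * A' ≤ M ^ 2 * (A - A') := by
      nlinarith [mul_le_mul_of_nonneg_left h1 (mul_nonneg hT hA)]
    have h3 : S * A * A' ≤ M ^ 2 * A' := mul_le_mul_of_nonneg_right hind hA'
    have h4 : ((S + T) * A') * A ≤ M ^ 2 * A := by nlinarith
    exact le_of_mul_le_mul_right h4 h0

end helpers

/-- Classical error bound of WOGA: for `f ∈ H(D,M)` and WOGA selections `ψ k` with
weakness parameters `t k`, residuals `fk n = f - P_{H_{n-1}} f`, and
`v k = ‖ψ k - P_{H_{k-1}} ψ k‖ > 0`, one has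
`‖fk n‖ ≤ M·(1 + ∑_{k=1}^{n-1} t k²)^{-1/2}`. -/
theorem stmt5 {H : Type*} [NormedAddCommGroup H] [InnerProductSpace ℂ H] [CompleteSpace H]
    (D : Set H) (hD_unit : ∀ φ ∈ D, ‖φ‖ = 1)
    (hD_span : (Submodule.span ℂ D).topologicalClosure = ⊤)
    (M : ℝ) (hM : 0 < M)
    (c : ℕ → ℂ) (ψt : ℕ → H) (hψt : ∀ j, ψt j ∈ D)
    (f : H) (hf : HasSum (fun j => c j • ψt j) f)
    (hc_summable : Summable fun j => ‖c j‖) (hcM : ∑' j, ‖c j‖ ≤ M)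
    (t : ℕ → ℝ) (ht : ∀ k, 1 ≤ k → 0 < t k ∧ t k ≤ 1)
    (ψ : ℕ → H) (hψD : ∀ k, 1 ≤ k → ψ k ∈ D)
    (Hk : ℕ → Submodule ℂ H)
    (hHk : ∀ k, Hk k = Submodule.span ℂ (ψ '' {j | 1 ≤ j ∧ j ≤ k}))
    (fk : ℕ → H) (hfk : ∀ n, 1 ≤ n → fk n = f - proj (Hk (n - 1)) f)
    (hsel : ∀ k, 1 ≤ k →
      t k * ⨆ φ : D, ‖(inner ℂ (fk k) (φ : H) : ℂ)‖ ≤ ‖(inner ℂ (fk k) (ψ k) : ℂ)‖)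
    (hv : ∀ k, 1 ≤ k → 0 < ‖ψ k - proj (Hk (k - 1)) (ψ k)‖) :
    ∀ n, 1 ≤ n → ‖fk n‖ ≤
      M / Real.sqrt (1 + ∑ k ∈ Finset.Icc 1 (n - 1), (t k) ^ 2) := by
  have hmono : ∀ a b : ℕ, a ≤ b → (Hk a).topologicalClosure ≤ (Hk b).topologicalClosure := by
    intro a b hab
    apply Submodule.topologicalClosure_mono
    rw [hHk a, hHk b]
    exact Submodule.span_mono (Set.image_mono (fun j hj => ⟨hj.1, hj.2.trans hab⟩))
  have hψmem : ∀ k, 1 ≤ k → ψ k ∈ Hk k := by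
    intro k hk; rw [hHk k]; exact Submodule.subset_span ⟨k, ⟨hk, le_refl k⟩, rfl⟩
  -- duality bound
  have hdual : ∀ n, 1 ≤ n → t n * ‖fk n‖ ^ 2 ≤ M * ‖(inner ℂ (fk n) (ψ n) : ℂ)‖ := by
    intro n hn
    set S := ⨆ φ : D, ‖(inner ℂ (fk n) (φ : H) : ℂ)‖ with hSdef
    have hbdd : BddAbove (Set.range fun φ : D => ‖(inner ℂ (fk n) (φ : H) : ℂ)‖) := by
      refine ⟨‖fk n‖, ?_⟩
      rintro x ⟨φ, rfl⟩
      calc ‖(inner ℂ (fk n) (φ : H) : ℂ)‖ ≤ ‖fk n‖ * ‖(φ : H)‖ := norm_inner_le_norm _ _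
        _ = ‖fk n‖ := by rw [hD_unit φ φ.2, mul_one]
    have hle : ∀ j, ‖(inner ℂ (fk n) (ψt j) : ℂ)‖ ≤ S :=
      fun j => le_ciSup hbdd (⟨ψt j, hψt j⟩ : D)
    have hS0 : 0 ≤ S := le_trans (norm_nonneg _) (hle 0)
    have hipf : (inner ℂ (fk n) f : ℂ) = (‖fk n‖ : ℂ) ^ 2 := by
      have hfeq : f = fk n + proj (Hk (n - 1)) f := by rw [hfk n hn]; abel
      calc (inner ℂ (fk n) f : ℂ)
          = inner ℂ (fk n) (fk n + proj (Hk (n - 1)) f) := by rw [← hfeq]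
        _ = inner ℂ (fk n) (fk n) + (inner ℂ (fk n) (proj (Hk (n - 1)) f) : ℂ) :=
            inner_add_right _ _ _
        _ = (‖fk n‖ : ℂ) ^ 2 + 0 := by
            rw [inner_self_eq_norm_sq_to_K]
            congr 1
            rw [hfk n hn]
            exact sub_proj_inner _ _ (proj_mem _ _)
        _ = (‖fk n‖ : ℂ) ^ 2 := add_zero _
    have hs2 : HasSum (fun j => (inner ℂ (fk n) (c j • ψt j) : ℂ)) (inner ℂ (fk n) f) :=
      (innerSL ℂ (fk n)).hasSum hf
    have hptle : ∀ j, ‖(inner ℂ (fk n) (c j • ψt j) : ℂ)‖ ≤ ‖c j‖ * S := by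
      intro j
      rw [inner_smul_right, norm_mul]
      exact mul_le_mul_of_nonneg_left (hle j) (norm_nonneg _)
    have hsummable : Summable (fun j => ‖(inner ℂ (fk n) (c j • ψt j) : ℂ)‖) :=
      Summable.of_nonneg_of_le (fun j => norm_nonneg _) hptle (hc_summable.mul_right S)
    have hnormle : ‖fk n‖ ^ 2 ≤ M * S := by
      have h4 : ‖(inner ℂ (fk n) f : ℂ)‖ = ‖fk n‖ ^ 2 := by
        rw [hipf, norm_pow, Complex.norm_real, norm_norm]
      calc ‖fk n‖ ^ 2 = ‖(inner ℂ (fk n) f : ℂ)‖ := h4.symm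
        _ ≤ ∑' j, ‖(inner ℂ (fk n) (c j • ψt j) : ℂ)‖ := by
            rw [← hs2.tsum_eq]; exact norm_tsum_le_tsum_norm hsummable
        _ ≤ ∑' j, ‖c j‖ * S := Summable.tsum_le_tsum hptle hsummable (hc_summable.mul_right S)
        _ = (∑' j, ‖c j‖) * S := tsum_mul_right
        _ ≤ M * S := mul_le_mul_of_nonneg_right hcM hS0
    calc t n * ‖fk n‖ ^ 2 ≤ t n * (M * S) :=
          mul_le_mul_of_nonneg_left hnormle (ht n hn).1.le
      _ = M * (t n * S) := by ring
      _ ≤ M * ‖(inner ℂ (fk n) (ψ n) : ℂ)‖ :=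
          mul_le_mul_of_nonneg_left (hsel n hn) hM.le
  -- one-step decrease
  have hstep : ∀ n, 1 ≤ n →
      ‖fk (n + 1)‖ ^ 2 ≤ ‖fk n‖ ^ 2 - ‖(inner ℂ (fk n) (ψ n) : ℂ)‖ ^ 2 := by
    intro n hn
    set z : ℂ := inner ℂ (fk n) (ψ n) with hz
    set c0 : ℂ := inner ℂ (ψ n) (fk n) with hc0
    have hc0z : c0 = starRingEnd ℂ z := by rw [hc0, hz, ← inner_conj_symm]
    set g : H := proj (Hk (n - 1)) f + c0 • ψ n with hg
    have hgmem : g ∈ (Hk n).topologicalClosure := by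
      apply add_mem
      · exact hmono (n - 1) n (Nat.sub_le n 1) (proj_mem _ _)
      · exact Submodule.le_topologicalClosure _ (Submodule.smul_mem _ _ (hψmem n hn))
    have h1 : ‖fk (n + 1)‖ ≤ ‖fk n - c0 • ψ n‖ := by
      have h2 : f - g = fk n - c0 • ψ n := by rw [hfk n hn, hg]; abel
      rw [hfk (n + 1) (by omega), Nat.add_sub_cancel, ← h2]
      exact norm_sub_proj_le _ _ hgmem
    have hψ1 : ‖ψ n‖ = 1 := hD_unit _ (hψD n hn)
    have h3 : ‖fk n - c0 • ψ n‖ ^ 2 = ‖fk n‖ ^ 2 - ‖z‖ ^ 2 := by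
      have hns := norm_sub_sq (𝕜 := ℂ) (fk n) (c0 • ψ n)
      have hin : (inner ℂ (fk n) (c0 • ψ n) : ℂ) = ((‖z‖ : ℂ)) ^ 2 := by
        rw [inner_smul_right, ← hz, hc0z]
        rw [mul_comm, Complex.mul_conj']
      have hre : RCLike.re (inner ℂ (fk n) (c0 • ψ n) : ℂ) = ‖z‖ ^ 2 := by
        rw [hin]; simp [← Complex.ofReal_pow]
      have hnc : ‖c0 • ψ n‖ = ‖z‖ := by
        rw [norm_smul, hψ1, mul_one, hc0z, RCLike.norm_conj]
      rw [hns, hre, hnc]; ring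
    have h1' : ‖fk (n + 1)‖ ^ 2 ≤ ‖fk n - c0 • ψ n‖ ^ 2 :=
      pow_le_pow_left₀ (norm_nonneg _) h1 2
    rw [h3] at h1'; exact h1'
  -- base bound
  have hbase : ‖fk 1‖ ≤ M := by
    have h1 : ‖fk 1‖ ≤ ‖f - 0‖ := by
      rw [hfk 1 le_rfl]
      exact norm_sub_proj_le _ _ (zero_mem _)
    rw [sub_zero] at h1
    have h3 : ∀ j, ‖c j • ψt j‖ = ‖c j‖ := fun j => by
      rw [norm_smul, hD_unit _ (hψt j), mul_one]
    have h2 : ‖f‖ ≤ ∑' j, ‖c j • ψt j‖ := by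
      rw [← hf.tsum_eq]
      exact norm_tsum_le_tsum_norm (by simpa only [h3] using hc_summable)
    calc ‖fk 1‖ ≤ ‖f‖ := h1
      _ ≤ ∑' j, ‖c j • ψt j‖ := h2
      _ = ∑' j, ‖c j‖ := tsum_congr h3
      _ ≤ M := hcM
  -- main induction
  have hmain : ∀ n, 1 ≤ n →
      (1 + ∑ k ∈ Finset.Icc 1 (n - 1), (t k) ^ 2) * ‖fk n‖ ^ 2 ≤ M ^ 2 := by
    intro n hn
    induction n, hn using Nat.le_induction with
    | base =>
      rw [show (1 : ℕ) - 1 = 0 from rfl, Finset.Icc_eq_empty (by omega), Finset.sum_empty,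
        add_zero, one_mul]
      exact pow_le_pow_left₀ (norm_nonneg _) hbase 2
    | succ n hn ih =>
      have hsum : ∑ k ∈ Finset.Icc 1 (n + 1 - 1), (t k) ^ 2
          = (∑ k ∈ Finset.Icc 1 (n - 1), (t k) ^ 2) + (t n) ^ 2 := by
        rw [Nat.add_sub_cancel]
        have hn1 : n - 1 + 1 = n := Nat.succ_pred_eq_of_pos hn
        rw [← hn1, Finset.sum_Icc_succ_top (by omega), hn1]
      rw [hsum, ← add_assoc]
      -- prepare hrec
      have hz0 : 0 ≤ ‖(inner ℂ (fk n) (ψ n) : ℂ)‖ := norm_nonneg _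
      have hsq : (t n * ‖fk n‖ ^ 2) ^ 2 ≤ (M * ‖(inner ℂ (fk n) (ψ n) : ℂ)‖) ^ 2 :=
        pow_le_pow_left₀ (mul_nonneg (ht n hn).1.le (sq_nonneg _)) (hdual n hn) 2
      have hrec : ‖fk (n + 1)‖ ^ 2 ≤
          ‖fk n‖ ^ 2 - (t n) ^ 2 * (‖fk n‖ ^ 2) ^ 2 / M ^ 2 := by
        have hM2 : (0:ℝ) < M ^ 2 := by positivity
        have h5 : (t n) ^ 2 * (‖fk n‖ ^ 2) ^ 2 / M ^ 2
            ≤ ‖(inner ℂ (fk n) (ψ n) : ℂ)‖ ^ 2 := by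
          rw [div_le_iff₀ hM2]; nlinarith [hsq]
        linarith [hstep n hn, h5]
      exact real_step hM (sq_nonneg _) (sq_nonneg _) hrec ih
  -- conclude
  intro n hn
  have hSnn : 0 ≤ ∑ k ∈ Finset.Icc 1 (n - 1), (t k) ^ 2 :=
    Finset.sum_nonneg fun _ _ => sq_nonneg _
  set Ssum := ∑ k ∈ Finset.Icc 1 (n - 1), (t k) ^ 2 with hSnndef
  have hpos : (0:ℝ) < 1 + Ssum := by linarith
  have hle : ‖fk n‖ ^ 2 ≤ M ^ 2 / (1 + Ssum) := by
    rw [le_div_iff₀ hpos]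
    calc ‖fk n‖ ^ 2 * (1 + Ssum) = (1 + Ssum) * ‖fk n‖ ^ 2 := by ring
      _ ≤ M ^ 2 := hmain n hn
  calc ‖fk n‖ = Real.sqrt (‖fk n‖ ^ 2) := (Real.sqrt_sq (norm_nonneg _)).symm
    _ ≤ Real.sqrt (M ^ 2 / (1 + Ssum)) := Real.sqrt_le_sqrt hle
    _ = M / Real.sqrt (1 + Ssum) := by
        rw [Real.sqrt_div (sq_nonneg M), Real.sqrt_sq hM.le]
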